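/- For 0 < p ≤ 1, the L^p quasi-norm of D_{2^{2n+1}} - D_{2^{2n}} satisfies ‖D_{2^{2n+1}} - D_{2^{2n}}‖_p ≤ c · 2^{2n(1 - 1/p)} for an absolute constant c, where ‖f‖_p = (∫_G |f|^p dμ)^{1/p}. -/

import Mathlib

open MeasureTheory

abbrev DyadicGroup : Type := ℕ → ZMod 2

instance : MeasurableSpace (ZMod 2) := ⊤

noncomputable section

/-- Rademacher function. -/
def rade (k : ℕ) (x : DyadicGroup) : ℝ := (-1 : ℝ) ^ (x k).val

/-- Walsh function. -/
def walsh (n : ℕ) (x : DyadicGroup) : ℝ :=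
  ∏ k ∈ Finset.range n, if n.testBit k then rade k x else 1

/-- Walsh–Dirichlet kernel. -/
def dirichletKer (n : ℕ) (x : DyadicGroup) : ℝ := ∑ k ∈ Finset.range n, walsh k x

/-- Cesàro numbers `A_n^α`. -/
def cesaroA (α : ℝ) (n : ℕ) : ℝ := (∏ i ∈ Finset.range n, (α + (i + 1))) / (n.factorial : ℝ)

/-- Walsh–Fourier coefficient. -/
def fourierCoef (μ : Measure DyadicGroup) (f : DyadicGroup → ℝ) (k : ℕ) : ℝ :=
  ∫ x, f x * walsh k x ∂μ

/-- Walsh–Fourier partial sum. -/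
def partialSum (μ : Measure DyadicGroup) (f : DyadicGroup → ℝ) (n : ℕ) (x : DyadicGroup) : ℝ :=
  ∑ k ∈ Finset.range n, fourierCoef μ f k * walsh k x

/-- `(C,α)` Cesàro mean of Walsh–Fourier series. -/
def cesaroMean (μ : Measure DyadicGroup) (α : ℝ) (n : ℕ) (f : DyadicGroup → ℝ)
    (x : DyadicGroup) : ℝ :=
  (cesaroA α n)⁻¹ * ∑ k ∈ Finset.Icc 1 n, cesaroA (α - 1) (n - k) * partialSum μ f k x

/-- The cylinder `I_M`. -/
def IM (M : ℕ) : Set DyadicGroup := {x | ∀ i < M, x i = 0}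

/-- `μ` is the Haar probability measure on the dyadic group: every cylinder of length `n`
has measure `2⁻ⁿ`. -/
def IsDyadicHaar (μ : Measure DyadicGroup) : Prop :=
  ∀ (n : ℕ) (x : DyadicGroup), μ {y | ∀ i < n, y i = x i} = (2 : ENNReal)⁻¹ ^ n

end


/-- The test function `f_n = D_{2^{2n+1}} - D_{2^{2n}}`. -/
def fN (n : ℕ) (x : DyadicGroup) : ℝ :=
  dirichletKer (2 ^ (2 * n + 1)) x - dirichletKer (2 ^ (2 * n)) x

lemma walsh_eq_prod (n N : ℕ) (h : n < 2 ^ N) (x : DyadicGroup) :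
    walsh n x = ∏ j ∈ Finset.range N, (if n.testBit j then rade j x else 1) := by
  have key : ∀ M, n ≤ M → N ≤ M →
      (∏ j ∈ Finset.range M, (if n.testBit j then rade j x else 1))
        = ∏ j ∈ Finset.range N, (if n.testBit j then rade j x else 1) := by
    intro M hn hN
    refine (Finset.prod_subset (Finset.range_subset_range.2 hN) ?_).symm
    intro j _ hj
    simp only [Finset.mem_range, not_lt] at hj
    have : n.testBit j = false :=
      Nat.testBit_lt_two_pow (lt_of_lt_of_le h (Nat.pow_le_pow_right (by norm_num) hj))
    simp [this]
  have key2 : (∏ j ∈ Finset.range (max n N), (if n.testBit j then rade j x else 1))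
      = ∏ j ∈ Finset.range n, (if n.testBit j then rade j x else 1) := by
    refine (Finset.prod_subset (Finset.range_subset_range.2 (le_max_left _ _)) ?_).symm
    intro j _ hj
    simp only [Finset.mem_range, not_lt] at hj
    have : n.testBit j = false :=
      Nat.testBit_lt_two_pow (lt_of_lt_of_le (Nat.lt_two_pow_self (n := n))
        (Nat.pow_le_pow_right (by norm_num) hj))
    simp [this]
  rw [walsh, ← key2, key (max n N) (le_max_left _ _) (le_max_right _ _)]

lemma walsh_two_pow_add (m k : ℕ) (hk : k < 2 ^ m) (x : DyadicGroup) :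
    walsh (2 ^ m + k) x = rade m x * walsh k x := by
  have h1 : 2 ^ m + k < 2 ^ (m + 1) := by
    rw [pow_succ, mul_two]; omega
  rw [walsh_eq_prod (2 ^ m + k) (m + 1) h1 x, Finset.prod_range_succ,
    Nat.testBit_two_pow_add_eq, Nat.testBit_lt_two_pow hk,
    walsh_eq_prod k m hk x]
  simp only [Bool.not_false, if_true]
  rw [mul_comm]
  congr 1
  refine Finset.prod_congr rfl fun j hj => ?_
  rw [Nat.testBit_two_pow_add_gt (Finset.mem_range.1 hj)]

lemma dirichletKer_two_pow (m : ℕ) (x : DyadicGroup) :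
    dirichletKer (2 ^ m) x = if (∀ i < m, x i = 0) then ((2 : ℝ) ^ m) else 0 := by
  induction m with
  | zero =>
    simp [dirichletKer, walsh]
  | succ m ih =>
    have : dirichletKer (2 ^ (m + 1)) x = (1 + rade m x) * dirichletKer (2 ^ m) x := by
      rw [dirichletKer, pow_succ, mul_two, Finset.sum_range_add]
      rw [add_mul, one_mul, dirichletKer, Finset.mul_sum]
      congr 1
      refine Finset.sum_congr rfl fun k hk => ?_
      rw [walsh_two_pow_add m k (Finset.mem_range.1 hk) x]
    rw [this, ih]
    rcases eq_or_ne (x m) 0 with hm | hm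
    · have hr : rade m x = 1 := by simp [rade, hm]
      by_cases hall : ∀ i < m, x i = 0
      · have hall' : ∀ i < m + 1, x i = 0 := by
          intro i hi
          rcases Nat.lt_succ_iff_lt_or_eq.1 hi with h | h
          · exact hall i h
          · subst h; exact hm
        rw [if_pos hall, if_pos hall', hr, pow_succ]; ring
      · have hall' : ¬ ∀ i < m + 1, x i = 0 := fun h => hall fun i hi => h i (hi.trans m.lt_succ_self)
        rw [if_neg hall, if_neg hall', mul_zero]
    · have hr : rade m x = -1 := by
        have : (x m).val = 1 := by
          have h1 := (x m).val_lt
          have h0 : (x m).val ≠ 0 := fun h0 => hm ((ZMod.val_eq_zero _).1 h0)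
          omega
        simp [rade, this]
      have hall' : ¬ ∀ i < m + 1, x i = 0 := fun h => hm (h m m.lt_succ_self)
      rw [if_neg hall', hr]
      ring

lemma abs_fN (n : ℕ) (x : DyadicGroup) :
    |fN n x| = if (∀ i < 2 * n, x i = 0) then ((2 : ℝ) ^ (2 * n)) else 0 := by
  rw [fN, dirichletKer_two_pow, dirichletKer_two_pow]
  by_cases h2 : ∀ i < 2 * n, x i = 0
  · rw [if_pos h2]
    by_cases h1 : ∀ i < 2 * n + 1, x i = 0
    · rw [if_pos h1, pow_succ]
      have e : (2 : ℝ) ^ (2 * n) * 2 - 2 ^ (2 * n) = 2 ^ (2 * n) := by ring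
      rw [e]
      exact abs_of_nonneg (by positivity)
    · rw [if_neg h1, zero_sub, abs_neg]
      exact abs_of_nonneg (by positivity)
  · have h1 : ¬ ∀ i < 2 * n + 1, x i = 0 := fun h => h2 fun i hi => h i (hi.trans (Nat.lt_succ_self _))
    rw [if_neg h1, if_neg h2]
    simp

theorem fN_Lp_norm (μ : Measure DyadicGroup) (hμ : IsDyadicHaar μ) :
    ∃ c : ℝ, 0 < c ∧ ∀ p : ℝ, 0 < p → p ≤ 1 → ∀ n : ℕ,
      (∫ x, |fN n x| ^ p ∂μ) ^ (1 / p) ≤ c * (2 : ℝ) ^ ((2 * n : ℝ) * (1 - 1 / p)) := by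
  refine ⟨1, one_pos, fun p hp hp1 n => ?_⟩
  set S : Set DyadicGroup := {y | ∀ i < 2 * n, y i = 0} with hSdef
  have hS : MeasurableSet S := by
    have : S = ⋂ i ∈ Finset.range (2 * n), (fun y : DyadicGroup => y i) ⁻¹' {0} := by
      ext y; simp [hSdef]
    rw [this]
    exact MeasurableSet.biInter (Finset.range _).countable_toSet
      (fun i _ => measurable_pi_apply i (show MeasurableSet ({0} : Set (ZMod 2)) from trivial))
  have hμS : μ S = (2 : ENNReal)⁻¹ ^ (2 * n) := by
    have := hμ (2 * n) (fun _ => 0)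
    simpa [hSdef] using this
  have hfun : (fun x => |fN n x| ^ p) = S.indicator (fun _ => ((2 : ℝ) ^ (2 * n)) ^ p) := by
    funext x
    rw [abs_fN]
    by_cases h : ∀ i < 2 * n, x i = 0
    · rw [if_pos h, Set.indicator_of_mem (show x ∈ S from h)]
    · rw [if_neg h, Set.indicator_of_notMem (show x ∉ S from h), Real.zero_rpow hp.ne']
  have hint : ∫ x, |fN n x| ^ p ∂μ = ((2 : ℝ)⁻¹) ^ (2 * n) * ((2 : ℝ) ^ (2 * n)) ^ p := by
    rw [hfun, integral_indicator_const _ hS, measureReal_def, hμS, smul_eq_mul]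
    congr 1
    rw [ENNReal.toReal_pow]
    norm_num
  rw [hint, one_mul]
  -- now pure real-number computation
  have h2 : (0 : ℝ) < 2 := two_pos
  set a : ℝ := (2 * n : ℝ) with ha
  have e1 : ((2 : ℝ)⁻¹) ^ (2 * n) = (2 : ℝ) ^ (-a) := by
    rw [inv_pow, Real.rpow_neg h2.le, ← Real.rpow_natCast 2 (2 * n), ha]
    push_cast
    ring_nf
  have e2 : ((2 : ℝ) ^ (2 * n) : ℝ) ^ p = (2 : ℝ) ^ (a * p) := by
    rw [← Real.rpow_natCast 2 (2 * n), ← Real.rpow_mul h2.le, ha]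
    push_cast
    ring_nf
  rw [e1, e2, ← Real.rpow_add h2, ← Real.rpow_mul h2.le]
  have : (-a + a * p) * (1 / p) = a * (1 - 1 / p) := by
    field_simp
    ring
  rw [this]
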